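/- Fix an order p and step number k, with r ∈ ℝ. The linear system over ℝ: find β_j ≥ 0 and δ_j ≥ 0 for 1 ≤ j ≤ k such that ∑_{j=1}^{k}((δ_j + r·β_j)·j^m − β_j·m·j^{m−1}) = 0^m for all 0 ≤ m ≤ p (with 0^0 = 1), is infeasible if and only if there exists a real polynomial q of degree at most p with q(j) ≥ 0 for 1 ≤ j ≤ k, −q'(j) + r·q(j) ≥ 0 for 1 ≤ j ≤ k, and q(0) < 0. -/

import Mathlib

namespace Stmt13Aux

variable {n : ℕ}

def dot (x y : Fin n → ℝ) : ℝ := ∑ i, x i * y i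

lemma dot_add (y u v : Fin n → ℝ) : dot y (u + v) = dot y u + dot y v := by
  simp [dot, mul_add, Finset.sum_add_distrib]

lemma dot_smul (y : Fin n → ℝ) (c : ℝ) (v : Fin n → ℝ) : dot y (c • v) = c * dot y v := by
  simp only [dot, Pi.smul_apply, smul_eq_mul, Finset.mul_sum]
  exact Finset.sum_congr rfl fun i _ => by ring

lemma dot_zero (y : Fin n → ℝ) : dot y 0 = 0 := by simp [dot]

lemma dot_sub (y u v : Fin n → ℝ) : dot y (u - v) = dot y u - dot y v := by
  simp [dot, mul_sub, Finset.sum_sub_distrib]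

lemma dot_self_pos {b : Fin n → ℝ} (hb : b ≠ 0) : 0 < dot b b := by
  have h : ∃ i, b i ≠ 0 := by
    by_contra h; push_neg at h; exact hb (funext h)
  obtain ⟨i, hi⟩ := h
  have hpos : 0 < b i * b i := mul_self_pos.2 hi
  exact Finset.sum_pos' (fun j _ => mul_self_nonneg _) ⟨i, Finset.mem_univ i, hpos⟩

lemma dot_sub_left (u v y : Fin n → ℝ) : dot (u - v) y = dot u y - dot v y := by
  simp [dot, sub_mul, Finset.sum_sub_distrib]

lemma dot_smul_left (c : ℝ) (u y : Fin n → ℝ) : dot (c • u) y = c * dot u y := by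
  simp only [dot, Pi.smul_apply, smul_eq_mul, Finset.mul_sum]
  exact Finset.sum_congr rfl fun i _ => by ring

def InCone : List (Fin n → ℝ) → (Fin n → ℝ) → Prop
  | [], b => b = 0
  | a :: l, b => ∃ t : ℝ, 0 ≤ t ∧ InCone l (b - t • a)

lemma InCone.dot_nonpos {y : Fin n → ℝ} : ∀ {l : List (Fin n → ℝ)} {b : Fin n → ℝ},
    InCone l b → (∀ a ∈ l, dot y a ≤ 0) → dot y b ≤ 0
  | [], b, hb, _ => by rw [show b = 0 from hb, dot_zero]
  | a :: l, b, ⟨t, ht, hrec⟩, hy => by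
    have h1 : dot y (b - t • a) ≤ 0 :=
      InCone.dot_nonpos hrec (fun v hv => hy v (List.mem_cons_of_mem a hv))
    rw [dot_sub, dot_smul] at h1
    have h2 : t * dot y a ≤ 0 :=
      mul_nonpos_of_nonneg_of_nonpos ht (hy a List.mem_cons_self)
    linarith

lemma lift_cone (y a : Fin n → ℝ) (α : ℝ) (hα : α = dot y a) (hα0 : α ≠ 0) :
    ∀ (l : List (Fin n → ℝ)), (∀ v ∈ l, dot y v ≤ 0) →
      ∀ w, InCone (l.map (fun v => v - (dot y v / α) • a)) w →
        ∃ u, InCone l u ∧ dot y u ≤ 0 ∧ u - (dot y u / α) • a = w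
  | [], _, w, hw => ⟨0, rfl, by rw [dot_zero], by
      rw [show w = 0 from hw, dot_zero]; simp⟩
  | v :: l, hl, w, hw => by
    obtain ⟨t, ht, hrec⟩ := hw
    obtain ⟨u', hu'cone, hu'dot, hu'eq⟩ :=
      lift_cone y a α hα hα0 l (fun x hx => hl x (List.mem_cons_of_mem v hx)) _ hrec
    refine ⟨u' + t • v, ⟨t, ht, by simpa using hu'cone⟩, ?_, ?_⟩
    · rw [dot_add, dot_smul]
      have := hl v List.mem_cons_self
      nlinarith
    · rw [dot_add, dot_smul]
      funext i
      have := congrFun hu'eq i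
      simp only [Pi.sub_apply, Pi.smul_apply, Pi.add_apply, smul_eq_mul] at this ⊢
      field_simp at this ⊢
      nlinarith [this]

theorem farkas_aux : ∀ (N : ℕ) (l : List (Fin n → ℝ)), l.length = N → ∀ b : Fin n → ℝ,
    InCone l b ∨ ∃ y, (∀ a ∈ l, dot y a ≤ 0) ∧ 0 < dot y b
  | 0, l, hl, b => by
    rw [List.length_eq_zero_iff] at hl
    subst hl
    by_cases hb : b = 0
    · exact Or.inl hb
    · exact Or.inr ⟨b, by simp, dot_self_pos hb⟩
  | N + 1, l, hl, b => by
    obtain ⟨a, l', rfl⟩ : ∃ a l', l = a :: l' := by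
      cases l with
      | nil => simp at hl
      | cons a l' => exact ⟨a, l', rfl⟩
    have hl' : l'.length = N := by simpa using hl
    rcases farkas_aux N l' hl' b with hc | ⟨y, hy, hyb⟩
    · exact Or.inl ⟨0, le_refl 0, by simpa using hc⟩
    by_cases ha : dot y a ≤ 0
    · refine Or.inr ⟨y, ?_, hyb⟩
      intro v hv
      rcases List.mem_cons.1 hv with rfl | hv
      · exact ha
      · exact hy v hv
    push_neg at ha
    set α := dot y a with hαdef
    have hα0 : α ≠ 0 := ne_of_gt ha
    set π : (Fin n → ℝ) → (Fin n → ℝ) := fun v => v - (dot y v / α) • a with hπ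
    have hlen : (l'.map π).length = N := by simpa using hl'
    rcases farkas_aux N (l'.map π) hlen (π b) with hc | ⟨z, hz, hzb⟩
    · -- lift back
      obtain ⟨u, hucone, hudot, hueq⟩ := lift_cone y a α rfl hα0 l' hy (π b) hc
      refine Or.inl ⟨(dot y b - dot y u) / α, div_nonneg (by linarith) (le_of_lt ha), ?_⟩
      have hb : b - ((dot y b - dot y u) / α) • a = u := by
        funext i
        have h1 := congrFun hueq i
        simp only [hπ, Pi.sub_apply, Pi.smul_apply, smul_eq_mul] at h1 ⊢
        field_simp at h1 ⊢
        nlinarith [h1]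
      rw [hb]
      exact hucone
    · -- new separating vector
      refine Or.inr ⟨z - (dot z a / α) • y, ?_, ?_⟩
      · intro v hv
        rcases List.mem_cons.1 hv with rfl | hv
        · rw [dot_sub_left, dot_smul_left, ← hαdef]
          field_simp
          simp
        · have hzv := hz (π v) (List.mem_map_of_mem (f := π) hv)
          rw [dot_sub_left, dot_smul_left]
          rw [hπ] at hzv
          simp only at hzv
          rw [dot_sub, dot_smul] at hzv
          have heq : dot z v - dot z a / α * dot y v
              = dot z v - dot y v / α * dot z a := by ring
          linarith [hzv, heq.le]
      · rw [dot_sub_left, dot_smul_left]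
        rw [hπ] at hzb
        simp only at hzb
        rw [dot_sub, dot_smul] at hzb
        have heq : dot z b - dot z a / α * dot y b
            = dot z b - dot y b / α * dot z a := by ring
        linarith [hzb, heq.le]

lemma InCone.append : ∀ {l₁ l₂ : List (Fin n → ℝ)} {b : Fin n → ℝ},
    InCone (l₁ ++ l₂) b → ∃ u, InCone l₁ u ∧ InCone l₂ (b - u)
  | [], l₂, b, h => ⟨0, rfl, by simpa using h⟩
  | a :: l₁, l₂, b, ⟨t, ht, hrec⟩ => by
    obtain ⟨u, hu1, hu2⟩ := InCone.append hrec
    refine ⟨u + t • a, ⟨t, ht, by simpa using hu1⟩, ?_⟩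
    have : b - (u + t • a) = b - t • a - u := by abel
    rw [this]; exact hu2

lemma InCone.ofFn : ∀ {m : ℕ} {f : Fin m → Fin n → ℝ} {b : Fin n → ℝ},
    InCone (List.ofFn f) b → ∃ c : Fin m → ℝ, (∀ i, 0 ≤ c i) ∧ b = ∑ i, c i • f i
  | 0, f, b, h => ⟨0, fun i => le_refl 0, by
      simpa using (show b = 0 by simpa [List.ofFn_zero, InCone] using h)⟩
  | m + 1, f, b, h => by
    rw [List.ofFn_succ] at h
    obtain ⟨t, ht, hrec⟩ := h
    obtain ⟨c, hc, hsum⟩ := InCone.ofFn hrec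
    refine ⟨Fin.cons t c, fun i => ?_, ?_⟩
    · refine Fin.cases ?_ ?_ i
      · simpa using ht
      · intro j; simpa using hc j
    · rw [Fin.sum_univ_succ]
      simp only [Fin.cons_zero, Fin.cons_succ]
      rw [← hsum]
      abel

lemma mem_ofFn_dot {m : ℕ} {f : Fin m → Fin n → ℝ} {y a : Fin n → ℝ}
    (h : ∀ i, dot y (f i) ≤ 0) (ha : a ∈ List.ofFn f) : dot y a ≤ 0 := by
  obtain ⟨i, rfl⟩ := List.mem_ofFn.1 ha
  exact h i

end Stmt13Aux

open Polynomial

theorem stmt13 (k p : ℕ) (hk : 1 ≤ k) (hp : 1 ≤ p) (r : ℝ) :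
    (¬ ∃ β δ : Fin k → ℝ, (∀ j, 0 ≤ β j) ∧ (∀ j, 0 ≤ δ j) ∧
        ∀ m : ℕ, m ≤ p →
          ∑ j : Fin k, ((δ j + r * β j) * ((j : ℝ) + 1) ^ m
              - β j * (m : ℝ) * ((j : ℝ) + 1) ^ (m - 1)) = (0 : ℝ) ^ m) ↔
    (∃ q : Polynomial ℝ, q.degree ≤ p ∧
        (∀ j : ℕ, 1 ≤ j → j ≤ k → 0 ≤ q.eval (j : ℝ)) ∧
        (∀ j : ℕ, 1 ≤ j → j ≤ k → 0 ≤ -q.derivative.eval (j : ℝ) + r * q.eval (j : ℝ)) ∧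
        q.eval 0 < 0) := by
  classical
  set colδ : Fin k → Fin (p+1) → ℝ := fun j m => ((j : ℝ) + 1) ^ (m : ℕ) with hcolδ
  set colβ : Fin k → Fin (p+1) → ℝ :=
    fun j m => r * ((j : ℝ) + 1) ^ (m : ℕ) - (m : ℝ) * ((j : ℝ) + 1) ^ ((m : ℕ) - 1) with hcolβ
  set bvec : Fin (p+1) → ℝ := fun m => (0 : ℝ) ^ (m : ℕ) with hbvec
  set L : List (Fin (p+1) → ℝ) := List.ofFn colδ ++ List.ofFn colβ with hL
  constructor
  · intro hinf
    have hnc : ¬ Stmt13Aux.InCone L bvec := by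
      intro h
      obtain ⟨u, hu, hv⟩ := Stmt13Aux.InCone.append h
      obtain ⟨δ, hδ, hδs⟩ := Stmt13Aux.InCone.ofFn hu
      obtain ⟨β, hβ, hβs⟩ := Stmt13Aux.InCone.ofFn hv
      refine hinf ⟨β, δ, hβ, hδ, ?_⟩
      intro m hm
      have hmm : m < p + 1 := Nat.lt_succ_of_le hm
      have h1 := congrFun hδs ⟨m, hmm⟩
      have h2 := congrFun hβs ⟨m, hmm⟩
      simp only [Finset.sum_apply, Pi.smul_apply, smul_eq_mul, Pi.sub_apply] at h1 h2
      simp only [hcolδ, hcolβ, hbvec] at h1 h2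
      have key : (0:ℝ) ^ m = ∑ j : Fin k, δ j * ((j:ℝ)+1)^m
          + ∑ j : Fin k, β j * (r * ((j:ℝ)+1)^m - (m:ℝ) * ((j:ℝ)+1)^(m-1)) := by
        rw [← h1, ← h2]; ring
      rw [key, ← Finset.sum_add_distrib]
      exact Finset.sum_congr rfl fun j _ => by ring
    rcases Stmt13Aux.farkas_aux L.length L rfl bvec with hc | ⟨y, hy, hyb⟩
    · exact absurd hc hnc
    have hyδ : ∀ i : Fin k, Stmt13Aux.dot y (colδ i) ≤ 0 := fun i =>
      hy (colδ i) (List.mem_append_left _ (List.mem_ofFn.2 ⟨i, rfl⟩))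
    have hyβ : ∀ i : Fin k, Stmt13Aux.dot y (colβ i) ≤ 0 := fun i =>
      hy (colβ i) (List.mem_append_right _ (List.mem_ofFn.2 ⟨i, rfl⟩))
    refine ⟨-(∑ m : Fin (p+1), Polynomial.C (y m) * Polynomial.X ^ (m : ℕ)), ?_, ?_, ?_, ?_⟩
    · rw [degree_neg]
      refine (degree_sum_le _ _).trans ?_
      rw [Finset.sup_le_iff]
      intro m _
      refine (degree_C_mul_X_pow_le (m : ℕ) (y m)).trans ?_
      exact_mod_cast Nat.le_of_lt_succ m.isLt
    · intro j hj1 hjk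
      have heval : ∀ x : ℝ,
          (-(∑ m : Fin (p+1), Polynomial.C (y m) * Polynomial.X ^ (m : ℕ))).eval x
            = -∑ m : Fin (p+1), y m * x ^ (m : ℕ) := by
        intro x; simp [eval_finset_sum]
      rw [heval]
      set i : Fin k := ⟨j - 1, by omega⟩ with hi
      have hcast : ((i : ℕ) : ℝ) + 1 = (j : ℝ) := by
        have : (i : ℕ) = j - 1 := rfl
        rw [this]
        have : ((j - 1 : ℕ) : ℝ) = (j : ℝ) - 1 := by
          push_cast [Nat.cast_sub hj1]; ring
        rw [this]; ring
      have := hyδ i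
      rw [Stmt13Aux.dot] at this
      simp only [hcolδ] at this
      rw [hcast] at this
      linarith
    · intro j hj1 hjk
      have heval : ∀ x : ℝ,
          (-(∑ m : Fin (p+1), Polynomial.C (y m) * Polynomial.X ^ (m : ℕ))).eval x
            = -∑ m : Fin (p+1), y m * x ^ (m : ℕ) := by
        intro x; simp [eval_finset_sum]
      have heval' : ∀ x : ℝ,
          (derivative (-(∑ m : Fin (p+1), Polynomial.C (y m) * Polynomial.X ^ (m : ℕ)))).eval x
            = -∑ m : Fin (p+1), y m * (m : ℕ) * x ^ ((m : ℕ) - 1) := by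
        intro x
        rw [derivative_neg, derivative_sum]
        simp only [derivative_C_mul, derivative_X_pow]
        simp [eval_finset_sum]
        apply Finset.sum_congr rfl
        intro m _
        ring
      rw [heval, heval']
      set i : Fin k := ⟨j - 1, by omega⟩ with hi
      have hcast : ((i : ℕ) : ℝ) + 1 = (j : ℝ) := by
        have h : (i : ℕ) = j - 1 := rfl
        rw [h]
        have : ((j - 1 : ℕ) : ℝ) = (j : ℝ) - 1 := by
          push_cast [Nat.cast_sub hj1]; ring
        rw [this]; ring
      have := hyβ i
      rw [Stmt13Aux.dot] at this
      simp only [hcolβ] at this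
      rw [hcast] at this
      have hexp : ∑ m : Fin (p+1), y m * (r * (j:ℝ)^(m:ℕ) - (m:ℝ) * (j:ℝ)^((m:ℕ)-1))
          = r * ∑ m : Fin (p+1), y m * (j:ℝ)^(m:ℕ)
            - ∑ m : Fin (p+1), y m * (m:ℕ) * (j:ℝ)^((m:ℕ)-1) := by
        rw [Finset.mul_sum, ← Finset.sum_sub_distrib]
        exact Finset.sum_congr rfl fun m _ => by push_cast; ring
      rw [hexp] at this
      linarith
    · have heval : (-(∑ m : Fin (p+1), Polynomial.C (y m) * Polynomial.X ^ (m : ℕ))).eval 0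
          = -∑ m : Fin (p+1), y m * (0:ℝ) ^ (m : ℕ) := by
        simp [eval_finset_sum]
      rw [heval]
      rw [Stmt13Aux.dot] at hyb
      simp only [hbvec] at hyb
      linarith
  · rintro ⟨q, hdeg, h1, h2, h0⟩ ⟨β, δ, hβ, hδ, heq⟩
    have hnd : q.natDegree < p + 1 :=
      Nat.lt_succ_of_le (natDegree_le_iff_degree_le.2 hdeg)
    have hx : ∀ x : ℝ, q.eval x = ∑ m ∈ Finset.range (p+1), q.coeff m * x ^ m :=
      fun x => eval_eq_sum_range' hnd x
    have hx' : ∀ x : ℝ, q.derivative.eval x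
        = ∑ m ∈ Finset.range (p+1), q.coeff m * (m : ℝ) * x ^ (m - 1) := by
      intro x
      conv_lhs => rw [q.as_sum_range' (p+1) hnd]
      rw [derivative_sum, eval_finset_sum]
      simp only [derivative_monomial, eval_monomial]
    have hS : ∑ m ∈ Finset.range (p+1), q.coeff m
          * (∑ j : Fin k, ((δ j + r * β j) * ((j : ℝ) + 1) ^ m
              - β j * (m : ℝ) * ((j : ℝ) + 1) ^ (m - 1)))
        = ∑ j : Fin k, (δ j * q.eval ((j : ℝ) + 1)
            + β j * (r * q.eval ((j : ℝ) + 1) - q.derivative.eval ((j : ℝ) + 1))) := by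
      simp only [Finset.mul_sum]
      rw [Finset.sum_comm]
      refine Finset.sum_congr rfl fun j _ => ?_
      rw [hx, hx']
      simp only [Finset.mul_sum, mul_sub, ← Finset.sum_sub_distrib, ← Finset.sum_add_distrib]
      exact Finset.sum_congr rfl fun m _ => by ring
    have hS0 : ∑ m ∈ Finset.range (p+1), q.coeff m
          * (∑ j : Fin k, ((δ j + r * β j) * ((j : ℝ) + 1) ^ m
              - β j * (m : ℝ) * ((j : ℝ) + 1) ^ (m - 1)))
        = q.eval 0 := by
      rw [hx 0]
      refine Finset.sum_congr rfl fun m hm => ?_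
      rw [heq m (Nat.lt_succ_iff.1 (Finset.mem_range.1 hm))]
    have hpos : 0 ≤ ∑ j : Fin k, (δ j * q.eval ((j : ℝ) + 1)
        + β j * (r * q.eval ((j : ℝ) + 1) - q.derivative.eval ((j : ℝ) + 1))) := by
      refine Finset.sum_nonneg fun j _ => ?_
      have hj1 : 1 ≤ (j : ℕ) + 1 := Nat.le_add_left 1 _
      have hjk : (j : ℕ) + 1 ≤ k := j.isLt
      have e1 := h1 ((j : ℕ) + 1) hj1 hjk
      have e2 := h2 ((j : ℕ) + 1) hj1 hjk
      push_cast at e1 e2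
      have t1 : 0 ≤ δ j * q.eval ((j : ℝ) + 1) := mul_nonneg (hδ j) e1
      have t2 : 0 ≤ β j * (r * q.eval ((j : ℝ) + 1) - q.derivative.eval ((j : ℝ) + 1)) :=
        mul_nonneg (hβ j) (by linarith)
      linarith
    rw [hS] at hS0
    linarith
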